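/- Let X be a bounded geometry metric space. Then the following two conditions are equivalent: (1) for all R, ε > 0 there exists S > 0 such that for every probability measure μ on X there exists a finitely supported function φ ∈ ℓ¹(X) with diam(supp(φ)) ≤ S and ∑_{x ∈ supp(μ)} μ(x) · ∑_{y ∈ supp(μ), d(x,y) ≤ R} |φ(x) − φ(y)| < ε · ∑_{x ∈ supp(μ)} μ(x)·|φ(x)|; (2) for all R, ε > 0 there exists S > 0 such that for every probability measure μ on X there exists a finite subset E ⊆ X with diam(E) ≤ S and μ(∂_R E) < ε · μ(E). -/

import Mathlib

open scoped Classical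

/-- `N_R(E)`, the `R`-neighbourhood of `E`. -/
def nbhd {X : Type*} [MetricSpace X] (R : ℝ) (E : Set X) : Set X :=
  {y | ∃ e ∈ E, dist y e ≤ R}

/-- `∂_R E = N_R(E) \ E`. -/
def bdry {X : Type*} [MetricSpace X] (R : ℝ) (E : Set X) : Set X :=
  nbhd R E \ E

/-- Bounded geometry. -/
def BoundedGeometry (X : Type*) [MetricSpace X] : Prop :=
  ∀ R : ℝ, 0 < R → ∃ N : ℕ, ∀ x : X,
    {y | dist x y ≤ R}.Finite ∧ {y | dist x y ≤ R}.ncard ≤ N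

/-- A probability measure on `X`, as a function. -/
def IsProbFn {X : Type*} (μ : X → ℝ) : Prop :=
  (∀ x, 0 ≤ μ x) ∧ Summable μ ∧ ∑' x, μ x = 1

/-- `μ(E)`. -/
noncomputable def measOf {X : Type*} (μ : X → ℝ) (E : Set X) : ℝ := ∑' x : E, μ x

/-- Uniform local amenability. -/
def ULA (X : Type*) [MetricSpace X] : Prop :=
  ∀ R : ℝ, 0 < R → ∀ ε : ℝ, 0 < ε → ∃ S : ℝ, 0 < S ∧
    ∀ F : Set X, F.Finite → ∃ E : Set X, E.Finite ∧
      EMetric.diam E ≤ ENNReal.ofReal S ∧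
      ((bdry R E ∩ F).ncard : ℝ) < ε * ((E ∩ F).ncard : ℝ)

/-- Measured uniform local amenability. -/
def ULAmu (X : Type*) [MetricSpace X] : Prop :=
  ∀ R : ℝ, 0 < R → ∀ ε : ℝ, 0 < ε → ∃ S : ℝ, 0 < S ∧
    ∀ μ : X → ℝ, IsProbFn μ → ∃ E : Set X, E.Finite ∧
      EMetric.diam E ≤ ENNReal.ofReal S ∧
      measOf μ (bdry R E) < ε * measOf μ E

/-- Coarse embedding. -/
def CoarseEmbedding {X Y : Type*} [MetricSpace X] [MetricSpace Y] (f : X → Y) : Prop :=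
  ∃ ρm ρp : ℝ → ℝ, Monotone ρm ∧ Monotone ρp ∧
    Filter.Tendsto ρm Filter.atTop Filter.atTop ∧
    ∀ x₁ x₂ : X, ρm (dist x₁ x₂) ≤ dist (f x₁) (f x₂) ∧
      dist (f x₁) (f x₂) ≤ ρp (dist x₁ x₂)

lemma tsum_subtype_eq_sum {X : Type*} (E : Set X) (f : X → ℝ) (t : Finset X)
    (h1 : ∀ x ∈ t, x ∈ E) (h2 : ∀ x, x ∈ E → f x ≠ 0 → x ∈ t) :
    ∑' x : E, f x = ∑ x ∈ t, f x := by
  rw [tsum_subtype]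
  rw [tsum_eq_sum (s := t) (fun x hx => ?_)]
  · exact Finset.sum_congr rfl fun x hx => Set.indicator_of_mem (h1 x hx) f
  · by_cases hE : x ∈ E
    · rw [Set.indicator_of_mem hE]
      by_contra hne
      exact hx (h2 x hE hne)
    · exact Set.indicator_of_notMem hE f

lemma measOf_eq_sum {X : Type*} (μ : X → ℝ) (E : Set X) (t : Finset X)
    (h1 : ∀ x ∈ t, x ∈ E) (h2 : ∀ x, x ∈ E → μ x ≠ 0 → x ∈ t) :
    measOf μ E = ∑ x ∈ t, μ x :=
  tsum_subtype_eq_sum E μ t h1 h2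

lemma nbhd_finite {X : Type*} [MetricSpace X] (hbg : BoundedGeometry X) {R : ℝ} (hR : 0 < R)
    {E : Set X} (hE : E.Finite) : (nbhd R E).Finite := by
  have : nbhd R E ⊆ ⋃ e ∈ E, {y | dist e y ≤ R} := by
    rintro y ⟨e, heE, hye⟩
    exact Set.mem_biUnion heE (by simpa [dist_comm] using hye)
  exact (hE.biUnion (fun e _ => ((hbg R hR).choose_spec e).1)).subset this

lemma nbhd_mono {X : Type*} [MetricSpace X] {R R' : ℝ} (h : R ≤ R') (E : Set X) :
    nbhd R E ⊆ nbhd R' E := fun _ ⟨e, heE, hye⟩ => ⟨e, heE, hye.trans h⟩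

lemma key_layercake {X : Type*} [MetricSpace X] (μ : X → ℝ) (hμ0 : ∀ x, 0 ≤ μ x)
    (R ε : ℝ)
    (nbr : X → Finset X) (hnbr : ∀ x y, y ∈ nbr x ↔ (μ y ≠ 0 ∧ dist x y ≤ R)) :
    ∀ n : ℕ, ∀ ψ : X → ℝ, (∀ x, 0 ≤ ψ x) → (∀ x, ψ x ≠ 0 → μ x ≠ 0) →
    ({x | ψ x ≠ 0}).Finite →
    (ψ '' {x | ψ x ≠ 0}).ncard = n →
    ∀ s : Finset X, (∀ x, ψ x ≠ 0 → x ∈ s) →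
    (∀ x, μ x ≠ 0 → (∃ y, ψ y ≠ 0 ∧ dist x y ≤ R) → x ∈ s) →
    (∀ t : ℝ, 0 < t → ε * measOf μ {x | t < ψ x} ≤ measOf μ (bdry R {x | t < ψ x})) →
    ε * ∑ x ∈ s, μ x * ψ x ≤ ∑ x ∈ s, μ x * ∑ y ∈ nbr x, |ψ x - ψ y| := by
  intro n
  induction n with
  | zero =>
    intro ψ hψ0 hψμ hfin hcard s hs1 hs2 hyp
    have himg : (ψ '' {x | ψ x ≠ 0}) = ∅ := (Set.ncard_eq_zero (hfin.image ψ)).1 hcard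
    have hz : ∀ x, ψ x = 0 := by
      intro x
      by_contra h
      have : ψ x ∈ ψ '' {x | ψ x ≠ 0} := ⟨x, h, rfl⟩
      simp [himg] at this
    simp [hz]
  | succ n IH =>
    intro ψ hψ0 hψμ hfin hcard s hs1 hs2 hyp
    set V : Set ℝ := ψ '' {x | ψ x ≠ 0} with hV
    have hVfin : V.Finite := hfin.image ψ
    have hVne : V.Nonempty := by
      apply Set.nonempty_of_ncard_ne_zero
      rw [hcard]; exact Nat.succ_ne_zero n
    have hVtne : hVfin.toFinset.Nonempty := by
      rwa [Set.Finite.toFinset_nonempty]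
    set m : ℝ := hVfin.toFinset.min' hVtne with hm
    have hmV : m ∈ V := hVfin.mem_toFinset.1 (Finset.min'_mem _ _)
    have hmle : ∀ v ∈ V, m ≤ v := fun v hv => Finset.min'_le _ v (hVfin.mem_toFinset.2 hv)
    have hm0 : 0 < m := by
      obtain ⟨x₀, hx₀, hq⟩ := hmV
      rw [← hq]
      exact lt_of_le_of_ne (hψ0 x₀) (Ne.symm hx₀)
    set ψ' : X → ℝ := fun x => if ψ x ≠ 0 then ψ x - m else 0 with hψ'
    have hmleψ : ∀ x, ψ x ≠ 0 → m ≤ ψ x := fun x h => hmle (ψ x) ⟨x, h, rfl⟩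
    have hψ'0 : ∀ x, 0 ≤ ψ' x := by
      intro x
      by_cases h : ψ x ≠ 0
      · simp only [hψ', if_pos h, sub_nonneg]
        exact hmleψ x h
      · push_neg at h; simp [hψ', h]
    have hsupp' : ∀ x, ψ' x ≠ 0 → ψ x ≠ 0 := by
      intro x h
      by_contra h0
      simp [hψ', h0] at h
    have hE' : {x | ψ' x ≠ 0} = {x | ψ x ≠ 0 ∧ ψ x ≠ m} := by
      ext x
      simp only [Set.mem_setOf_eq]
      constructor
      · intro h
        have h1 := hsupp' x h
        refine ⟨h1, ?_⟩
        intro hxm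
        apply h
        simp [hψ', h1, hxm]
      · rintro ⟨h1, h2⟩
        simp only [hψ', if_pos h1]
        exact sub_ne_zero_of_ne h2
    have hfin' : {x | ψ' x ≠ 0}.Finite := hfin.subset (fun x hx => hsupp' x hx)
    have hcard' : (ψ' '' {x | ψ' x ≠ 0}).ncard = n := by
      have himg : ψ' '' {x | ψ' x ≠ 0} = (fun v => v - m) '' (V \ {m}) := by
        ext v
        constructor
        · rintro ⟨x, hx, rfl⟩
          rw [hE'] at hx
          obtain ⟨hx1, hx2⟩ := hx
          exact ⟨ψ x, ⟨⟨x, hx1, rfl⟩, hx2⟩, by simp [hψ', hx1]⟩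
        · rintro ⟨w, ⟨⟨x, hx, rfl⟩, hne⟩, rfl⟩
          have hxm : ψ x ≠ m := by simpa using hne
          refine ⟨x, ?_, ?_⟩
          · rw [hE']; exact ⟨hx, hxm⟩
          · show (if ψ x ≠ 0 then ψ x - m else 0) = ψ x - m
            simp only [Set.mem_setOf_eq] at hx
            rw [if_pos hx]
      rw [himg, Set.ncard_image_of_injective _ (sub_left_injective (b := m)),
        Set.ncard_diff_singleton_of_mem hmV, hcard]
      omega
    have hyp' : ∀ t : ℝ, 0 < t →
        ε * measOf μ {x | t < ψ' x} ≤ measOf μ (bdry R {x | t < ψ' x}) := by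
      intro t ht
      have hset : {x | t < ψ' x} = {x | t + m < ψ x} := by
        ext x
        simp only [Set.mem_setOf_eq]
        by_cases h : ψ x ≠ 0
        · simp only [hψ', if_pos h]
          constructor
          · intro hh; linarith
          · intro hh; linarith
        · push_neg at h
          simp only [hψ', h]
          constructor
          · intro hh; simp at hh; linarith
          · intro hh; linarith
      rw [hset]
      exact hyp (t + m) (by positivity)
    have h_IH := IH ψ' hψ'0 (fun x h => hψμ x (hsupp' x h)) hfin' hcard' s
      (fun x h => hs1 x (hsupp' x h))
      (fun x hx ⟨y, hy, hd⟩ => hs2 x hx ⟨y, hsupp' y hy, hd⟩) hyp'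
    have hmeasE : measOf μ {x | ψ x ≠ 0} = ∑ x ∈ s.filter (fun x => ψ x ≠ 0), μ x :=
      measOf_eq_sum μ _ _ (fun x hx => (Finset.mem_filter.1 hx).2)
        (fun x hx hne => Finset.mem_filter.2 ⟨hs1 x hx, hx⟩)
    have A1 : ∑ x ∈ s, μ x * ψ x
        = (∑ x ∈ s, μ x * ψ' x) + m * measOf μ {x | ψ x ≠ 0} := by
      rw [hmeasE, Finset.sum_filter, Finset.mul_sum, ← Finset.sum_add_distrib]
      refine Finset.sum_congr rfl fun x hx => ?_
      by_cases h : ψ x ≠ 0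
      · simp only [hψ', if_pos h]; ring
      · push_neg at h; simp [hψ', h]
    have P0 : ∀ a b : X, |ψ' a - ψ' b| ≤ |ψ a - ψ b| := by
      intro a b
      by_cases ha : ψ a ≠ 0 <;> by_cases hb : ψ b ≠ 0
      · simp only [hψ', if_pos ha, if_pos hb, sub_sub_sub_cancel_right, le_refl]
      · push_neg at hb
        simp only [hψ', if_pos ha, hb, if_neg (by simp : ¬(0:ℝ) ≠ 0), sub_zero]
        have h1 : m ≤ ψ a := hmleψ a ha
        rw [abs_of_nonneg (by linarith), abs_of_nonneg (by linarith)]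
        linarith
      · push_neg at ha
        simp only [hψ', ha, if_pos hb, if_neg (by simp : ¬(0:ℝ) ≠ 0), zero_sub]
        have h1 : m ≤ ψ b := hmleψ b hb
        rw [abs_neg, abs_neg, abs_of_nonneg (by linarith), abs_of_nonneg (by linarith)]
        linarith
      · push_neg at ha hb
        simp [hψ', ha, hb]
    have hx_bd : ∀ x ∈ s,
        μ x * (if x ∈ bdry R {x | ψ x ≠ 0} then m else 0) + μ x * ∑ y ∈ nbr x, |ψ' x - ψ' y|
          ≤ μ x * ∑ y ∈ nbr x, |ψ x - ψ y| := by
      intro x _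
      rw [← mul_add]
      apply mul_le_mul_of_nonneg_left _ (hμ0 x)
      by_cases hbx : x ∈ bdry R {x | ψ x ≠ 0}
      · rw [if_pos hbx]
        obtain ⟨⟨e, heE, hxe⟩, hxE⟩ := hbx
        have heψ : ψ e ≠ 0 := heE
        have hxψ : ψ x = 0 := by simpa using hxE
        have henbr : e ∈ nbr x := (hnbr x e).2 ⟨hψμ e heψ, hxe⟩
        have hsingle : m ≤ ∑ y ∈ nbr x, (|ψ x - ψ y| - |ψ' x - ψ' y|) := by
          have hval : |ψ x - ψ e| - |ψ' x - ψ' e| = m := by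
            simp only [hψ', if_pos heψ, hxψ, if_neg (by simp : ¬(0:ℝ) ≠ 0), zero_sub,
              abs_neg]
            have h1 : m ≤ ψ e := hmleψ e heψ
            rw [abs_of_nonneg (by linarith), abs_of_nonneg (by linarith)]
            ring
          rw [← hval]
          exact Finset.single_le_sum (fun y _ => sub_nonneg.2 (P0 x y)) henbr
        rw [Finset.sum_sub_distrib] at hsingle
        linarith
      · rw [if_neg hbx, zero_add]
        exact Finset.sum_le_sum (fun y _ => P0 x y)
    have A3 : ∑ x ∈ s, μ x * (if x ∈ bdry R {x | ψ x ≠ 0} then m else 0)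
        = m * measOf μ (bdry R {x | ψ x ≠ 0}) := by
      have hmeasB : measOf μ (bdry R {x | ψ x ≠ 0})
          = ∑ x ∈ s.filter (fun x => x ∈ bdry R {x | ψ x ≠ 0}), μ x := by
        apply measOf_eq_sum μ _ _ (fun x hx => (Finset.mem_filter.1 hx).2)
        intro x hx hne
        refine Finset.mem_filter.2 ⟨?_, hx⟩
        obtain ⟨⟨e, heE, hxe⟩, _⟩ := hx
        exact hs2 x hne ⟨e, heE, hxe⟩
      rw [hmeasB, Finset.mul_sum, Finset.sum_filter]
      refine Finset.sum_congr rfl fun x hx => ?_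
      by_cases h : x ∈ bdry R {x | ψ x ≠ 0} <;> simp [h, mul_comm]
    have hEset : {x | m/2 < ψ x} = {x | ψ x ≠ 0} := by
      ext x
      simp only [Set.mem_setOf_eq]
      constructor
      · intro h; intro h0; rw [h0] at h; linarith
      · intro h; have := hmleψ x h; linarith
    have hbd : ε * measOf μ {x | ψ x ≠ 0} ≤ measOf μ (bdry R {x | ψ x ≠ 0}) := by
      have := hyp (m/2) (by positivity)
      rwa [hEset] at this
    have hbd2 : m * (ε * measOf μ {x | ψ x ≠ 0}) ≤ m * measOf μ (bdry R {x | ψ x ≠ 0}) :=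
      mul_le_mul_of_nonneg_left hbd hm0.le
    calc ε * ∑ x ∈ s, μ x * ψ x
        = ε * ∑ x ∈ s, μ x * ψ' x + m * (ε * measOf μ {x | ψ x ≠ 0}) := by
          rw [A1]; ring
      _ ≤ (∑ x ∈ s, μ x * ∑ y ∈ nbr x, |ψ' x - ψ' y|)
            + m * measOf μ (bdry R {x | ψ x ≠ 0}) := add_le_add h_IH hbd2
      _ = ∑ x ∈ s, (μ x * (if x ∈ bdry R {x | ψ x ≠ 0} then m else 0)
            + μ x * ∑ y ∈ nbr x, |ψ' x - ψ' y|) := by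
          rw [Finset.sum_add_distrib, A3]; ring
      _ ≤ ∑ x ∈ s, μ x * ∑ y ∈ nbr x, |ψ x - ψ y| := Finset.sum_le_sum hx_bd

theorem ulamu_function_iff_set {X : Type*} [MetricSpace X] (hbg : BoundedGeometry X) :
    (∀ R : ℝ, 0 < R → ∀ ε : ℝ, 0 < ε → ∃ S : ℝ, 0 < S ∧
      ∀ μ : X → ℝ, IsProbFn μ → ∃ φ : X → ℝ,
        (Function.support φ).Finite ∧
        EMetric.diam (Function.support φ) ≤ ENNReal.ofReal S ∧
        (∑' x : Function.support μ,
            μ x * ∑' y : {y : X | μ y ≠ 0 ∧ dist (x : X) y ≤ R}, |φ x - φ y|)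
          < ε * ∑' x : Function.support μ, μ x * |φ (x : X)|)
    ↔
    (∀ R : ℝ, 0 < R → ∀ ε : ℝ, 0 < ε → ∃ S : ℝ, 0 < S ∧
      ∀ μ : X → ℝ, IsProbFn μ → ∃ E : Set X, E.Finite ∧
        EMetric.diam E ≤ ENNReal.ofReal S ∧
        measOf μ (bdry R E) < ε * measOf μ E) := by
  constructor
  · -- function formulation implies set formulation
    intro hfun R hR ε hε
    obtain ⟨S, hS, hF⟩ := hfun R hR ε hε
    refine ⟨S, hS, ?_⟩
    intro μ hμ
    by_contra hcon
    push_neg at hcon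
    obtain ⟨φ, hφfin, hφdiam, hlt⟩ := hF μ hμ
    have hμ0 := hμ.1
    have hball : ∀ x : X, {y | dist x y ≤ R}.Finite := fun x => ((hbg R hR).choose_spec x).1
    set nbr : X → Finset X := fun x => (hball x).toFinset.filter (fun y => μ y ≠ 0) with hnbrdef
    have hnbr : ∀ x y, y ∈ nbr x ↔ (μ y ≠ 0 ∧ dist x y ≤ R) := by
      intro x y
      constructor
      · intro h
        rcases Finset.mem_filter.1 h with ⟨h1, h2⟩
        exact ⟨h2, (hball x).mem_toFinset.1 h1⟩
      · rintro ⟨h1, h2⟩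
        exact Finset.mem_filter.2 ⟨(hball x).mem_toFinset.2 h2, h1⟩
    set ψ : X → ℝ := fun x => if μ x ≠ 0 then |φ x| else 0 with hψdef
    have hψ0 : ∀ x, 0 ≤ ψ x := by
      intro x
      by_cases h : μ x ≠ 0
      · simp only [hψdef, if_pos h]; exact abs_nonneg _
      · push_neg at h; simp [hψdef, h]
    have hψμ : ∀ x, ψ x ≠ 0 → μ x ≠ 0 := by
      intro x h
      by_contra h0
      simp [hψdef, h0] at h
    have hψsupp : ∀ x, ψ x ≠ 0 → φ x ≠ 0 := by
      intro x h
      intro hφx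
      apply h
      simp [hψdef, hφx]
    have hfinψ : {x | ψ x ≠ 0}.Finite := hφfin.subset (fun x hx => hψsupp x hx)
    have hnbhdfin : (nbhd R {x | ψ x ≠ 0}).Finite := nbhd_finite hbg hR hfinψ
    set s : Finset X := (hfinψ.union hnbhdfin).toFinset with hsdef
    have hs1 : ∀ x, ψ x ≠ 0 → x ∈ s := fun x hx => (Set.Finite.mem_toFinset _).2 (Or.inl hx)
    have hs2 : ∀ x, μ x ≠ 0 → (∃ y, ψ y ≠ 0 ∧ dist x y ≤ R) → x ∈ s := by
      rintro x _ ⟨y, hy, hd⟩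
      exact (Set.Finite.mem_toFinset _).2 (Or.inr ⟨y, hy, hd⟩)
    have hyp : ∀ t : ℝ, 0 < t →
        ε * measOf μ {x | t < ψ x} ≤ measOf μ (bdry R {x | t < ψ x}) := by
      intro t ht
      apply hcon
      · exact hfinψ.subset (fun x hx => ne_of_gt (lt_trans ht hx))
      · refine le_trans (EMetric.diam_mono ?_) hφdiam
        intro x hx
        exact hψsupp x (ne_of_gt (lt_trans ht hx))
    have hkey := key_layercake μ hμ0 R ε nbr hnbr _ ψ hψ0 hψμ hfinψ rfl s hs1 hs2 hyp
    set B : Finset X := s ∪ hφfin.toFinset with hBdef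
    have hsB : s ⊆ B := Finset.subset_union_left
    set t2 : Finset X := B.filter (fun x => μ x ≠ 0) with ht2
    have hRHS : (∑' x : Function.support μ, μ x * |φ (x : X)|) = ∑ x ∈ t2, μ x * |φ x| := by
      refine tsum_subtype_eq_sum (Function.support μ) (fun x => μ x * |φ x|) t2 ?_ ?_
      · intro x hx; exact (Finset.mem_filter.1 hx).2
      · intro x hx hne
        refine Finset.mem_filter.2 ⟨?_, hx⟩
        have hφx : φ x ≠ 0 := by
          intro h0; apply hne; simp [h0]
        exact Finset.mem_union.2 (Or.inr (hφfin.mem_toFinset.2 hφx))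
    have hsum1 : ∑ x ∈ t2, μ x * |φ x| = ∑ x ∈ t2, μ x * ψ x := by
      refine Finset.sum_congr rfl fun x hx => ?_
      have hh := (Finset.mem_filter.1 hx).2
      simp [hψdef, hh]
    have hsum2 : ∑ x ∈ t2, μ x * ψ x = ∑ x ∈ B, μ x * ψ x := by
      apply Finset.sum_subset (Finset.filter_subset _ _)
      intro x hxB hxt
      have : μ x = 0 := by
        by_contra h; exact hxt (Finset.mem_filter.2 ⟨hxB, h⟩)
      simp [this]
    have hsum3 : ∑ x ∈ s, μ x * ψ x = ∑ x ∈ B, μ x * ψ x := by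
      apply Finset.sum_subset hsB
      intro x _ hxs
      have : ψ x = 0 := by
        by_contra h; exact hxs (hs1 x h)
      simp [this]
    have hinner : ∀ x : X,
        (∑' y : {y : X | μ y ≠ 0 ∧ dist x y ≤ R}, |φ x - φ y|) = ∑ y ∈ nbr x, |φ x - φ y| := by
      intro x
      refine tsum_subtype_eq_sum {y : X | μ y ≠ 0 ∧ dist x y ≤ R} (fun y => |φ x - φ y|) (nbr x) ?_ ?_
      · intro y hy; exact (hnbr x y).1 hy
      · intro y hy _; exact (hnbr x y).2 hy
    have hLHS : (∑' x : Function.support μ,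
          μ x * ∑' y : {y : X | μ y ≠ 0 ∧ dist (x : X) y ≤ R}, |φ x - φ y|)
        = ∑ x ∈ t2, μ x * ∑ y ∈ nbr x, |φ x - φ y| := by
      rw [tsum_congr (fun x : Function.support μ => by rw [hinner (x : X)])]
      refine tsum_subtype_eq_sum (Function.support μ)
        (fun x => μ x * ∑ y ∈ nbr x, |φ x - φ y|) t2 ?_ ?_
      · intro x hx; exact (Finset.mem_filter.1 hx).2
      · intro x hx hne
        refine Finset.mem_filter.2 ⟨?_, hx⟩
        have hΔ : (∑ y ∈ nbr x, |φ x - φ y|) ≠ 0 := by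
          intro h0; apply hne; show μ x * ∑ y ∈ nbr x, |φ x - φ y| = 0; rw [h0]; ring
        obtain ⟨y, hymem, hyne⟩ := Finset.exists_ne_zero_of_sum_ne_zero hΔ
        rcases (hnbr x y).1 hymem with ⟨hμy, hdxy⟩
        have hor : φ x ≠ 0 ∨ φ y ≠ 0 := by
          by_contra hc; push_neg at hc
          apply hyne; rw [hc.1, hc.2]; simp
        rcases hor with h | h
        · exact Finset.mem_union.2 (Or.inr (hφfin.mem_toFinset.2 h))
        · have hψy : ψ y ≠ 0 := by
            simp only [hψdef, if_pos hμy]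
            simpa using h
          exact hsB (hs2 x hx ⟨y, hψy, hdxy⟩)
    have hΔcomp : ∑ x ∈ s, μ x * ∑ y ∈ nbr x, |ψ x - ψ y|
        ≤ ∑ x ∈ t2, μ x * ∑ y ∈ nbr x, |φ x - φ y| := by
      have e1 : ∑ x ∈ s, μ x * ∑ y ∈ nbr x, |ψ x - ψ y|
          = ∑ x ∈ s.filter (fun x => μ x ≠ 0), μ x * ∑ y ∈ nbr x, |ψ x - ψ y| := by
        symm
        apply Finset.sum_subset (Finset.filter_subset _ _)
        intro x hx hxf
        have : μ x = 0 := by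
          by_contra h; exact hxf (Finset.mem_filter.2 ⟨hx, h⟩)
        simp [this]
      rw [e1]
      calc ∑ x ∈ s.filter (fun x => μ x ≠ 0), μ x * ∑ y ∈ nbr x, |ψ x - ψ y|
          ≤ ∑ x ∈ s.filter (fun x => μ x ≠ 0), μ x * ∑ y ∈ nbr x, |φ x - φ y| := by
            apply Finset.sum_le_sum
            intro x hx
            have hμx := (Finset.mem_filter.1 hx).2
            apply mul_le_mul_of_nonneg_left _ (hμ0 x)
            apply Finset.sum_le_sum
            intro y hy
            have hμy := ((hnbr x y).1 hy).1
            have h1 : ψ x = |φ x| := by simp [hψdef, hμx]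
            have h2 : ψ y = |φ y| := by simp [hψdef, hμy]
            rw [h1, h2]
            exact abs_abs_sub_abs_le_abs_sub _ _
        _ ≤ ∑ x ∈ t2, μ x * ∑ y ∈ nbr x, |φ x - φ y| := by
            apply Finset.sum_le_sum_of_subset_of_nonneg
            · intro x hx
              rcases Finset.mem_filter.1 hx with ⟨h1, h2⟩
              exact Finset.mem_filter.2 ⟨hsB h1, h2⟩
            · intro x _ _
              exact mul_nonneg (hμ0 x) (Finset.sum_nonneg fun y _ => abs_nonneg _)
    rw [hRHS, hsum1, hsum2, ← hsum3, hLHS] at hlt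
    linarith
  · -- set formulation implies function formulation
    intro hset R hR ε hε
    obtain ⟨N, hN⟩ := hbg R hR
    set n : ℕ := ⌈(2 * ((N : ℝ) + 1)) / ε⌉₊ + 1 with hn
    have hn1 : 1 ≤ n := Nat.le_add_left 1 _
    have hεn : 2 * ((N : ℝ) + 1) ≤ ε * n := by
      have h1 : (2 * ((N : ℝ) + 1)) / ε ≤ (⌈(2 * ((N : ℝ) + 1)) / ε⌉₊ : ℝ) := Nat.le_ceil _
      have h2 : (2 * ((N : ℝ) + 1)) / ε ≤ (n : ℝ) := by
        rw [hn]; push_cast; linarith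
      calc 2 * ((N : ℝ) + 1) = ((2 * ((N : ℝ) + 1)) / ε) * ε := by field_simp
        _ ≤ (n : ℝ) * ε := mul_le_mul_of_nonneg_right h2 hε.le
        _ = ε * n := mul_comm _ _
    set R' : ℝ := ((n : ℝ) + 1) * R with hR'
    have hR'pos : 0 < R' := by positivity
    obtain ⟨S₀, hS₀, hset'⟩ := hset R' hR'pos 1 one_pos
    refine ⟨S₀ + 2 * n * R + 1, by positivity, ?_⟩
    intro μ hμ
    obtain ⟨E, hEfin, hEdiam, hEbd⟩ := hset' μ hμ
    have hμ0 := hμ.1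
    set φ : X → ℝ := fun x => ∑ k ∈ Finset.range n,
      (if x ∈ nbhd ((k : ℝ) * R) E then (1 : ℝ) else 0) with hφdef
    have hφ0 : ∀ x, 0 ≤ φ x := by
      intro x
      apply Finset.sum_nonneg
      intro k _
      split <;> norm_num
    have hmem_self : ∀ x ∈ E, ∀ k : ℕ, x ∈ nbhd ((k : ℝ) * R) E := by
      intro x hx k
      exact ⟨x, hx, by rw [dist_self]; positivity⟩
    have hφE : ∀ x ∈ E, φ x = n := by
      intro x hx
      show (∑ k ∈ Finset.range n, (if x ∈ nbhd ((k : ℝ) * R) E then (1:ℝ) else 0)) = n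
      rw [Finset.sum_congr rfl (fun k _ => if_pos (hmem_self x hx k))]
      simp
    have hsuppφ : Function.support φ ⊆ nbhd ((n : ℝ) * R) E := by
      intro x hx
      have hx' : φ x ≠ 0 := hx
      obtain ⟨k, hk, hkne⟩ := Finset.exists_ne_zero_of_sum_ne_zero hx'
      have hxk : x ∈ nbhd ((k : ℝ) * R) E := by
        by_contra h; rw [if_neg h] at hkne; exact hkne rfl
      refine nbhd_mono ?_ E hxk
      have hkn : (k : ℝ) ≤ n := by
        exact_mod_cast (Finset.mem_range.1 hk).le
      nlinarith
    have hnR' : (n : ℝ) * R ≤ R' := by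
      rw [hR']; nlinarith
    have hW : (nbhd R' E).Finite := nbhd_finite hbg hR'pos hEfin
    have hsuppW : Function.support φ ⊆ nbhd R' E := hsuppφ.trans (nbhd_mono hnR' E)
    have hφfin : (Function.support φ).Finite := hW.subset hsuppW
    have hdistE : ∀ e ∈ E, ∀ e' ∈ E, dist e e' ≤ S₀ := by
      intro e he e' he'
      have h1 : ENNReal.ofReal (dist e e') ≤ ENNReal.ofReal S₀ := by
        rw [← edist_dist]
        exact le_trans (EMetric.edist_le_diam_of_mem he he') hEdiam
      exact (ENNReal.ofReal_le_ofReal_iff hS₀.le).1 h1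
    have hφdiam : EMetric.diam (Function.support φ) ≤ ENNReal.ofReal (S₀ + 2*n*R + 1) := by
      apply EMetric.diam_le
      intro x hx y hy
      obtain ⟨e, he, hxe⟩ := hsuppφ hx
      obtain ⟨e', he', hye⟩ := hsuppφ hy
      rw [edist_dist]
      apply ENNReal.ofReal_le_ofReal
      have h1 : dist x y ≤ dist x e + dist e e' + dist e' y := dist_triangle4 x e e' y
      have h2 := hdistE e he e' he'
      have h3 : dist e' y = dist y e' := dist_comm _ _
      linarith
    have hLip : ∀ x y : X, dist x y ≤ R → φ y ≤ φ x + 1 := by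
      intro x y hxy
      set b : ℕ → ℝ := fun k => if x ∈ nbhd ((k : ℝ) * R) E then (1:ℝ) else 0 with hb
      have hstep : ∀ k : ℕ, (if y ∈ nbhd ((k : ℝ) * R) E then (1:ℝ) else 0) ≤ b (k+1) := by
        intro k
        by_cases hy' : y ∈ nbhd ((k : ℝ) * R) E
        · obtain ⟨e, he, hye⟩ := hy'
          have hxe : dist x e ≤ ((k:ℕ)+1 : ℕ) * R := by
            push_cast
            have := dist_triangle x y e
            nlinarith
          have hxm : x ∈ nbhd ((((k:ℕ)+1 : ℕ) : ℝ) * R) E := ⟨e, he, hxe⟩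
          rw [if_pos (show y ∈ nbhd ((k : ℝ) * R) E from ⟨e, he, hye⟩), hb]
          simp only []
          rw [if_pos hxm]
        · rw [if_neg hy']
          simp only [hb]
          split <;> norm_num
      have h4 : φ y ≤ ∑ k ∈ Finset.range n, b (k+1) :=
        Finset.sum_le_sum (fun k _ => hstep k)
      have h5 : ∑ k ∈ Finset.range (n+1), b k = (∑ k ∈ Finset.range n, b (k+1)) + b 0 :=
        Finset.sum_range_succ' b n
      have h6 : ∑ k ∈ Finset.range (n+1), b k = (∑ k ∈ Finset.range n, b k) + b n :=
        Finset.sum_range_succ b n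
      have h7 : (∑ k ∈ Finset.range n, b k) = φ x := rfl
      have hb0 : 0 ≤ b 0 := by simp only [hb]; split <;> norm_num
      have hbn : b n ≤ 1 := by simp only [hb]; split <;> norm_num
      linarith
    have hLip1 : ∀ x y : X, dist x y ≤ R → |φ x - φ y| ≤ 1 := by
      intro x y hxy
      rw [abs_sub_le_iff]
      constructor
      · linarith [hLip y x (by rwa [dist_comm])]
      · linarith [hLip x y hxy]
    have hball : ∀ x : X, {y | dist x y ≤ R}.Finite := fun x => (hN x).1
    set nbr : X → Finset X := fun x => (hball x).toFinset.filter (fun y => μ y ≠ 0) with hnbrdef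
    have hnbr : ∀ x y, y ∈ nbr x ↔ (μ y ≠ 0 ∧ dist x y ≤ R) := by
      intro x y
      constructor
      · intro h
        rcases Finset.mem_filter.1 h with ⟨h1, h2⟩
        exact ⟨h2, (hball x).mem_toFinset.1 h1⟩
      · rintro ⟨h1, h2⟩
        exact Finset.mem_filter.2 ⟨(hball x).mem_toFinset.2 h2, h1⟩
    have hcard : ∀ x : X, ((nbr x).card : ℝ) ≤ N := by
      intro x
      have h1 : (nbr x).card ≤ (hball x).toFinset.card :=
        Finset.card_le_card (Finset.filter_subset _ _)
      have h2 : (hball x).toFinset.card = {y | dist x y ≤ R}.ncard :=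
        (Set.ncard_eq_toFinset_card _ (hball x)).symm
      have h3 : (nbr x).card ≤ N := by
        rw [h2] at h1
        exact le_trans h1 (hN x).2
      exact_mod_cast h3
    have hinnerle : ∀ x : X, ∑ y ∈ nbr x, |φ x - φ y| ≤ (N : ℝ) := by
      intro x
      calc ∑ y ∈ nbr x, |φ x - φ y| ≤ ∑ _y ∈ nbr x, (1:ℝ) :=
            Finset.sum_le_sum (fun y hy => hLip1 x y ((hnbr x y).1 hy).2)
        _ = ((nbr x).card : ℝ) := by simp
        _ ≤ N := hcard x
    set W : Set X := nbhd R' E with hWdef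
    have hEW : E ⊆ W := fun e he => ⟨e, he, by rw [dist_self]; positivity⟩
    set t : Finset X := hW.toFinset.filter (fun x => μ x ≠ 0) with ht
    have htW : ∀ x ∈ t, x ∈ W := fun x hx => hW.mem_toFinset.1 (Finset.mem_filter.1 hx).1
    have htcov : ∀ x, x ∈ W → μ x ≠ 0 → x ∈ t :=
      fun x hx hne => Finset.mem_filter.2 ⟨hW.mem_toFinset.2 hx, hne⟩
    have hmW : measOf μ W = ∑ x ∈ t, μ x := measOf_eq_sum μ W t htW htcov
    have htE : measOf μ E = ∑ x ∈ t.filter (fun x => x ∈ E), μ x := by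
      apply measOf_eq_sum μ E _ (fun x hx => (Finset.mem_filter.1 hx).2)
      intro x hx hne
      exact Finset.mem_filter.2 ⟨htcov x (hEW hx) hne, hx⟩
    have htB : measOf μ (bdry R' E) = ∑ x ∈ t.filter (fun x => x ∉ E), μ x := by
      apply measOf_eq_sum μ (bdry R' E) _
      · intro x hx
        rcases Finset.mem_filter.1 hx with ⟨h1, h2⟩
        exact ⟨htW x h1, h2⟩
      · intro x hx hne
        exact Finset.mem_filter.2 ⟨htcov x hx.1 hne, hx.2⟩
    have hsplit : measOf μ W = measOf μ E + measOf μ (bdry R' E) := by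
      rw [hmW, htE, htB, Finset.sum_filter_add_sum_filter_not]
    have hRHSeq : (∑' x : Function.support μ, μ x * |φ (x : X)|) = ∑ x ∈ t, μ x * |φ x| := by
      refine tsum_subtype_eq_sum (Function.support μ) (fun x => μ x * |φ x|) t ?_ ?_
      · intro x hx; exact (Finset.mem_filter.1 hx).2
      · intro x hx hne
        have hφx : φ x ≠ 0 := by
          intro h0; apply hne; simp [h0]
        exact htcov x (hsuppW hφx) hx
    have hinner : ∀ x : X,
        (∑' y : {y : X | μ y ≠ 0 ∧ dist x y ≤ R}, |φ x - φ y|) = ∑ y ∈ nbr x, |φ x - φ y| := by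
      intro x
      refine tsum_subtype_eq_sum {y : X | μ y ≠ 0 ∧ dist x y ≤ R}
        (fun y => |φ x - φ y|) (nbr x) ?_ ?_
      · intro y hy; exact (hnbr x y).1 hy
      · intro y hy _; exact (hnbr x y).2 hy
    have hLHSeq : (∑' x : Function.support μ,
          μ x * ∑' y : {y : X | μ y ≠ 0 ∧ dist (x : X) y ≤ R}, |φ x - φ y|)
        = ∑ x ∈ t, μ x * ∑ y ∈ nbr x, |φ x - φ y| := by
      rw [tsum_congr (fun x : Function.support μ => by rw [hinner (x : X)])]
      refine tsum_subtype_eq_sum (Function.support μ)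
        (fun x => μ x * ∑ y ∈ nbr x, |φ x - φ y|) t ?_ ?_
      · intro x hx; exact (Finset.mem_filter.1 hx).2
      · intro x hx hne
        refine htcov x ?_ hx
        have hΔ : (∑ y ∈ nbr x, |φ x - φ y|) ≠ 0 := by
          intro h0; apply hne; show μ x * ∑ y ∈ nbr x, |φ x - φ y| = 0; rw [h0]; ring
        obtain ⟨y, hymem, hyne⟩ := Finset.exists_ne_zero_of_sum_ne_zero hΔ
        rcases (hnbr x y).1 hymem with ⟨_, hdxy⟩
        have hor : φ x ≠ 0 ∨ φ y ≠ 0 := by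
          by_contra hc; push_neg at hc
          apply hyne; rw [hc.1, hc.2]; simp
        rcases hor with h | h
        · exact hsuppW h
        · obtain ⟨e, he, hye⟩ := hsuppφ h
          refine ⟨e, he, ?_⟩
          have := dist_triangle x y e
          rw [hR']
          nlinarith
    have hTge : (n : ℝ) * measOf μ E ≤ ∑ x ∈ t, μ x * |φ x| := by
      rw [htE, Finset.mul_sum]
      have hcongr : ∀ x ∈ t.filter (fun x => x ∈ E), (n:ℝ) * μ x = μ x * |φ x| := by
        intro x hx
        have hxE : x ∈ E := (Finset.mem_filter.1 hx).2
        rw [hφE x hxE, abs_of_nonneg (by positivity : (0:ℝ) ≤ (n:ℝ))]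
        ring
      rw [Finset.sum_congr rfl hcongr]
      apply Finset.sum_le_sum_of_subset_of_nonneg (Finset.filter_subset _ _)
      intro x _ _; exact mul_nonneg (hμ0 x) (abs_nonneg _)
    have hLle : ∑ x ∈ t, μ x * ∑ y ∈ nbr x, |φ x - φ y| ≤ (N:ℝ) * measOf μ W := by
      rw [hmW, Finset.mul_sum]
      apply Finset.sum_le_sum
      intro x _
      calc μ x * ∑ y ∈ nbr x, |φ x - φ y| ≤ μ x * N :=
            mul_le_mul_of_nonneg_left (hinnerle x) (hμ0 x)
        _ = (N:ℝ) * μ x := mul_comm _ _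
    have hBpos : 0 ≤ measOf μ (bdry R' E) := by
      rw [htB]; exact Finset.sum_nonneg fun x _ => hμ0 x
    have hEbd' : measOf μ (bdry R' E) < measOf μ E := by linarith [hEbd]
    have hEpos : 0 < measOf μ E := lt_of_le_of_lt hBpos hEbd'
    refine ⟨φ, hφfin, hφdiam, ?_⟩
    rw [hLHSeq, hRHSeq]
    have hNB : (N:ℝ) * measOf μ (bdry R' E) ≤ (N:ℝ) * measOf μ E :=
      mul_le_mul_of_nonneg_left hEbd'.le (Nat.cast_nonneg N)
    have hNN : (2*((N:ℝ)+1)) * measOf μ E ≤ (ε * n) * measOf μ E :=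
      mul_le_mul_of_nonneg_right hεn hEpos.le
    have hfin : ε * ((n:ℝ) * measOf μ E) ≤ ε * ∑ x ∈ t, μ x * |φ x| :=
      mul_le_mul_of_nonneg_left hTge hε.le
    nlinarith [hsplit, hLle]
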